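/- arXiv:2102.00963 — 2 statements merged into one kernel-verified Lean document; each statement's English description precedes it below -/
import Mathlib

section
/- Fix an integer d ≥ 3 and z ∈ ℂ⁺. Let 𝒢 be a finite tree with all vertex degrees at most d and a distinguished root o with deg_𝒢(o) ≤ d − 1, equipped with the deficit function g(v) = 1 if v = o and g(v) = 0 otherwise. Then the Green's function of the extension of 𝒢 with weight m_sc(z) satisfies G_{oi}(Ext(𝒢, m_sc(z)), z) = m_sc(z)·(−m_sc(z)/√(d−1))^{dist_𝒢(o,i)} for every vertex i. In particular, Y_k(m_sc(z), z) = m_sc(z) for every integer k ≥ 1. -/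
open scoped Classical

noncomputable section

namespace Paper

/-- The degree of a vertex `v` in `G`. -/
def deg {V : Type} (G : SimpleGraph V) (v : V) : ℕ :=
  Nat.card {u : V // G.Adj v u}

/-- `G` is a `d`-regular graph. -/
def IsRegular {V : Type} (d : ℕ) (G : SimpleGraph V) : Prop :=
  ∀ v, deg G v = d

/-- The excess of a finite graph: #edges - #vertices + #components. -/
def excess {V : Type} (G : SimpleGraph V) : ℤ :=
  (Nat.card G.edgeSet : ℤ) - (Nat.card V : ℤ) + (Nat.card G.ConnectedComponent : ℤ)

/-- The set of vertices at graph distance at most `R` from the set `S`. -/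
def ball {V : Type} (G : SimpleGraph V) (S : Set V) (R : ℝ) : Set V :=
  {v | ∃ u ∈ S, ∃ w : G.Walk u v, (w.length : ℝ) ≤ R}

/-- There is a path between `u` and `v` of length at most `R`. -/
def distLE {V : Type} (G : SimpleGraph V) (u v : V) (R : ℝ) : Prop :=
  ∃ w : G.Walk u v, (w.length : ℝ) ≤ R

/-- The normalized adjacency matrix `A/√(d-1)`, over `ℂ`. -/
def normAdj {V : Type} (d : ℕ) (G : SimpleGraph V) : Matrix V V ℂ :=
  Matrix.of fun i j => if G.Adj i j then ((Real.sqrt ((d : ℝ) - 1) : ℂ))⁻¹ else 0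

/-- The normalized adjacency matrix `A/√(d-1)`, over `ℝ`. -/
def normAdjR {V : Type} (d : ℕ) (G : SimpleGraph V) : Matrix V V ℝ :=
  Matrix.of fun i j => if G.Adj i j then (Real.sqrt ((d : ℝ) - 1))⁻¹ else 0

/-- The Green's function `(H - z)⁻¹`. -/
def green {V : Type} [Fintype V] [DecidableEq V] (d : ℕ) (G : SimpleGraph V) (z : ℂ) :
    Matrix V V ℂ :=
  (normAdj d G - z • (1 : Matrix V V ℂ))⁻¹

/-- The Stieltjes transform `m_N(z) = Tr G(z)/N`. -/
def mN {V : Type} [Fintype V] [DecidableEq V] (d : ℕ) (G : SimpleGraph V) (z : ℂ) : ℂ :=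
  (Nat.card V : ℂ)⁻¹ * Matrix.trace (green d G z)

/-- `m_sc(z)`: the root of `m² + zm + 1 = 0` with positive imaginary part. -/
def mSC (z : ℂ) : ℂ :=
  if h : ∃ m : ℂ, m ^ 2 + z * m + 1 = 0 ∧ 0 < m.im then h.choose else 0

/-- `m_d(z) = (-z - d m_sc(z)/(d-1))⁻¹`. -/
def mD (d : ℕ) (z : ℂ) : ℂ :=
  (-z - (d : ℂ) * mSC z / ((d : ℂ) - 1))⁻¹

/-- `κ(z) = min(|Re z - 2|, |Re z + 2|)`. -/
def kappa (z : ℂ) : ℝ :=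
  min |z.re - 2| |z.re + 2|

/-- The matrix `H - z - Σ_v ((d - g v - deg v)/(d-1)) Δ e_vv` defining the
extension of `(G, g)` with weight `Δ`. -/
def extMatrix {V : Type} [Fintype V] [DecidableEq V] (d : ℕ) (G : SimpleGraph V)
    (g : V → ℕ) (Δ z : ℂ) : Matrix V V ℂ :=
  normAdj d G - z • (1 : Matrix V V ℂ) -
    Matrix.diagonal fun v => (((d : ℂ) - (g v : ℂ) - (deg G v : ℂ)) / ((d : ℂ) - 1)) * Δ

/-- The Green's function of the extension of `(G, g)` with weight `Δ`. -/
def extGreen {V : Type} [Fintype V] [DecidableEq V] (d : ℕ) (G : SimpleGraph V)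
    (g : V → ℕ) (Δ z : ℂ) : Matrix V V ℂ :=
  (extMatrix d G g Δ z)⁻¹

/-- Entry `(i,j)` of the Green's function of the extension with weight `Δ` of the
ball `B_R(S, G)`, the ball carrying the deficit function inherited from the ambient
deficit function `g0`. -/
def ballGreen {V : Type} [Fintype V] [DecidableEq V] (d : ℕ) (G : SimpleGraph V)
    (g0 : V → ℕ) (S : Set V) (R : ℝ) (Δ z : ℂ) (i j : V) : ℂ :=
  if h : i ∈ ball G S R ∧ j ∈ ball G S R then
    extGreen d (G.induce (ball G S R)) (fun v => g0 v.val) Δ z ⟨i, h.1⟩ ⟨j, h.2⟩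
  else 0

/-- The quantity `Q(G,z) = (Nd)⁻¹ Σ_{i ∼ j} G^{(j)}_{ii}(z)`. -/
def Qfun {N : ℕ} (d : ℕ) (G : SimpleGraph (Fin N)) (z : ℂ) : ℂ :=
  ((N : ℂ) * (d : ℂ))⁻¹ *
    ∑ j : Fin N, ∑ i : Fin N,
      if h : G.Adj i j then
        green d (G.induce {k : Fin N | k ≠ j}) z ⟨i, h.ne⟩ ⟨i, h.ne⟩
      else 0

/-- Logarithm in base `d - 1`. -/
def logb (d : ℕ) (x : ℝ) : ℝ :=
  Real.log x / Real.log ((d : ℝ) - 1)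

/-- The radius `ℜ = (c/4) log_{d-1} N`. -/
def RR (N d : ℕ) (c : ℝ) : ℝ :=
  (c / 4) * logb d (N : ℝ)

/-- The radius `r = r₀ log_{d-1} N`. -/
def rr (N d : ℕ) (r₀ : ℝ) : ℝ :=
  r₀ * logb d (N : ℝ)

/-- The set `Ω̄(ω)` of radius-`ℜ` tree-like `d`-regular graphs. -/
def OmegaBar (N d : ℕ) (c : ℝ) (ω : ℕ) : Set (SimpleGraph (Fin N)) :=
  {G | IsRegular d G ∧
    (∀ v : Fin N, excess (G.induce (ball G {v} (RR N d c))) ≤ (ω : ℤ)) ∧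
    (Nat.card {v : Fin N // ¬ (G.induce (ball G {v} (RR N d c))).IsAcyclic} : ℝ) ≤ (N : ℝ) ^ c}

/-- The control parameter `ε₀(z)`. -/
def eps0 (N d : ℕ) (a r : ℝ) (z : ℂ) : ℝ :=
  Real.log (N : ℝ) ^ (8 * a) *
    (((d : ℝ) - 1) ^ (-r) + Real.sqrt ((mD d z).im / ((N : ℝ) * z.im)) +
      ((N : ℝ) * z.im) ^ (-(2 / 3 : ℝ)))

/-- The control parameter `ε(z)`. -/
def eps (N d : ℕ) (a r : ℝ) (z : ℂ) : ℝ :=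
  if eps0 N d a r z ≤ (kappa z + z.im) / Real.log (N : ℝ) then eps0 N d a r z
  else Real.log (N : ℝ) ^ 4 * eps0 N d a r z

/-- The set `Ω(z)` of spectrally regular graphs. -/
def OmegaSet (N d : ℕ) (c a r₀ : ℝ) (ω : ℕ) (z : ℂ) : Set (SimpleGraph (Fin N)) :=
  {G | G ∈ OmegaBar N d c ω ∧
    ‖Qfun d G z - mSC z‖ ≤
      eps N d a (rr N d r₀) z / Real.sqrt (kappa z + z.im + eps N d a (rr N d r₀) z) ∧
    ∀ i j : Fin N,
      ‖green d G z i j -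
          ballGreen d G (fun v => d - deg G v) {i, j} (rr N d r₀) (Qfun d G z) z i j‖ ≤
        eps N d a (rr N d r₀) z}

/-- The set `Ω⁻(z)`. -/
def OmegaMinus (N d : ℕ) (c a r₀ : ℝ) (ω : ℕ) (z : ℂ) : Set (SimpleGraph (Fin N)) :=
  {G | G ∈ OmegaBar N d c ω ∧
    ‖Qfun d G z - mSC z‖ ≤
      eps N d a (rr N d r₀) z / (2 * Real.sqrt (kappa z + z.im + eps N d a (rr N d r₀) z)) ∧
    ∀ i j : Fin N,
      ‖green d G z i j -
          ballGreen d G (fun v => d - deg G v) {i, j} (rr N d r₀) (Qfun d G z) z i j‖ ≤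
        eps N d a (rr N d r₀) z / 2}

/-- `(T, o)` is a depth-`k` truncated `(d-1)`-ary tree with root `o`. -/
def IsTruncAry (d k : ℕ) {V : Type} (T : SimpleGraph V) (o : V) : Prop :=
  T.IsTree ∧ (∀ v, T.dist o v ≤ k) ∧ deg T o = d - 1 ∧
    ∀ v, v ≠ o → T.dist o v < k → deg T v = d

/-- `(T, o)` is a depth-`k` truncated `d`-regular tree with root `o`. -/
def IsTruncReg (d k : ℕ) {V : Type} (T : SimpleGraph V) (o : V) : Prop :=
  T.IsTree ∧ (∀ v, T.dist o v ≤ k) ∧ ∀ v, T.dist o v < k → deg T v = d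

/-- The Kesten–McKay density. -/
def rhoD (d : ℕ) (x : ℝ) : ℝ :=
  (1 + 1 / ((d : ℝ) - 1) - x ^ 2 / (d : ℝ))⁻¹ * Real.sqrt (max (4 - x ^ 2) 0) / (2 * Real.pi)

/-- The diameter of a finite graph. -/
def gDiam {V : Type} [Fintype V] (T : SimpleGraph V) : ℕ :=
  Finset.univ.sup fun p : V × V => T.dist p.1 p.2

/-- The set of boundary edges of `s`, oriented from inside to outside. -/
def bndSet {V : Type} (G : SimpleGraph V) (s : Set V) : Set (V × V) :=
  {p | G.Adj p.1 p.2 ∧ p.1 ∈ s ∧ p.2 ∉ s}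

/-- The vertex set of the connected component of `u` in the subgraph induced on `s`. -/
def comp {V : Type} (G : SimpleGraph V) (s : Set V) (u : V) : Set V :=
  {w | ∃ (hu : u ∈ s) (hw : w ∈ s), (G.induce s).Reachable ⟨u, hu⟩ ⟨w, hw⟩}

/-- The number of neighbors of `v` inside `s`. -/
def degIn {V : Type} (G : SimpleGraph V) (s : Set V) (v : V) : ℕ :=
  Nat.card {w : V // w ∈ s ∧ G.Adj v w}

/-- The deterministic correction `δ_Q(z)`. -/
def deltaQ (N d l : ℕ) (z : ℂ) : ℂ :=
  (((d : ℂ) - 1) ^ (l + 1) - 1) * mSC z ^ (2 * l + 2) *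
    (1 + mSC z / (Real.sqrt ((d : ℝ) - 1) : ℂ)) ^ 2 *
    ((N : ℂ) * ((d : ℂ) / (Real.sqrt ((d : ℝ) - 1) : ℂ) - z))⁻¹

lemma mSC_eq (z : ℂ) (hz : 0 < z.im) : (mSC z) ^ 2 + z * mSC z + 1 = 0 ∧ 0 < (mSC z).im := by
  have hex : ∃ m : ℂ, m ^ 2 + z * m + 1 = 0 ∧ 0 < m.im := by
    set w : ℂ := (z ^ 2 - 4) ^ (((2 : ℕ) : ℂ))⁻¹ with hwdef
    have hw : w ^ 2 = z ^ 2 - 4 := by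
      rw [hwdef]; exact Complex.cpow_nat_inv_pow _ two_ne_zero
    set m1 : ℂ := (-z + w) / 2 with hm1def
    have h1 : m1 ^ 2 + z * m1 + 1 = 0 := by
      have : m1 ^ 2 + z * m1 + 1 = (w ^ 2 - (z ^ 2 - 4)) / 4 := by rw [hm1def]; ring
      rw [this, hw]; ring
    have hm10 : m1 ≠ 0 := by
      intro h; rw [h] at h1; simp at h1
    have him : m1.im ≠ 0 := by
      intro h0
      have hre : m1 = (m1.re : ℂ) := by
        apply Complex.ext <;> simp [h0]
      rw [hre] at h1
      have him1 : (((m1.re : ℂ)) ^ 2 + z * (m1.re : ℂ) + 1).im = z.im * m1.re := by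
        simp [Complex.add_im, Complex.mul_im, pow_two, Complex.mul_re]
      rw [h1] at him1
      have hr0 : m1.re ≠ 0 := by
        intro h; apply hm10; rw [hre, h]; simp
      have : z.im = 0 := by
        rcases mul_eq_zero.mp him1.symm with h | h
        · exact h
        · exact absurd h hr0
      linarith
    rcases lt_or_gt_of_ne him with hneg | hpos
    · refine ⟨m1⁻¹, ?_, ?_⟩
      · have h2 : (m1⁻¹) ^ 2 + z * m1⁻¹ + 1 = (m1 ^ 2 + z * m1 + 1) * (m1⁻¹) ^ 2 := by
          field_simp
          ring
        rw [h2, h1, zero_mul]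
      · rw [Complex.inv_im]
        have hns : 0 < Complex.normSq m1 := Complex.normSq_pos.mpr hm10
        exact div_pos (by linarith) hns
    · exact ⟨m1, h1, hpos⟩
  rw [mSC, dif_pos hex]
  exact hex.choose_spec

lemma exists_path_dist {V : Type} [DecidableEq V] {T : SimpleGraph V} (h : T.Connected)
    (a b : V) : ∃ P : T.Walk a b, P.IsPath ∧ P.length = T.dist a b := by
  obtain ⟨w, hw⟩ := (h.preconnected a b).exists_walk_length_eq_dist
  exact ⟨w.bypass, w.bypass_isPath,
    le_antisymm (hw ▸ w.length_bypass_le) (SimpleGraph.dist_le _)⟩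

lemma tree_path_length {V : Type} [DecidableEq V] {T : SimpleGraph V} (hT : T.IsTree)
    {o i : V} (p : T.Walk o i) (hp : p.IsPath) : p.length = T.dist o i := by
  obtain ⟨-, hu⟩ := SimpleGraph.isTree_iff_existsUnique_path.mp hT
  obtain ⟨q, hq, huniq⟩ := hu o i
  obtain ⟨P, hP, hPl⟩ := exists_path_dist hT.isConnected o i
  rw [huniq p hp, ← huniq P hP, hPl]

lemma tree_parent {V : Type} [DecidableEq V] {T : SimpleGraph V} (hT : T.IsTree)
    (o i : V) (hi : i ≠ o) :
    ∃ p : V, T.Adj i p ∧ T.dist o p + 1 = T.dist o i ∧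
      ∀ u, T.Adj i u → u ≠ p → T.dist o u = T.dist o i + 1 := by
  obtain ⟨-, huP⟩ := SimpleGraph.isTree_iff_existsUnique_path.mp hT
  have huniq : ∀ {a b : V} (p q : T.Walk a b), p.IsPath → q.IsPath → p = q := by
    intro a b p q hp hq
    obtain ⟨r, _, hr⟩ := huP a b
    rw [hr p hp, hr q hq]
  obtain ⟨q, hq, hql⟩ := exists_path_dist hT.isConnected o i
  set k := T.dist o i with hk
  have hk0 : 0 < k := hT.isConnected.pos_dist_of_ne (Ne.symm hi)
  obtain ⟨p, hadj, rest, hcons⟩ := SimpleGraph.Walk.exists_eq_cons_of_ne hi q.reverse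
  have hqrev : q.reverse.IsPath := (q.isPath_reverse_iff).mpr hq
  have hrest : rest.IsPath := by
    rw [hcons] at hqrev; exact hqrev.of_cons
  have hrestl : rest.length + 1 = k := by
    have := q.length_reverse
    rw [hcons] at this
    simp only [SimpleGraph.Walk.length_cons] at this
    omega
  have hdp : T.dist o p + 1 = k := by
    have := tree_path_length hT rest.reverse ((rest.isPath_reverse_iff).mpr hrest)
    rw [rest.length_reverse] at this
    omega
  refine ⟨p, hadj, hdp, ?_⟩
  intro u hu hup
  have hiu : i ≠ u := hu.ne
  obtain ⟨P, hP, hPl⟩ := exists_path_dist hT.isConnected o u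
  by_cases hiP : i ∈ P.support
  · -- distance o u = k + 1
    have ht1 : k ≤ (P.takeUntil i hiP).length := hk ▸ SimpleGraph.dist_le _
    have ht2 : 1 ≤ (P.dropUntil i hiP).length := by
      have h1 : T.dist i u ≤ (P.dropUntil i hiP).length := SimpleGraph.dist_le _
      have h2 : T.dist i u = 1 := SimpleGraph.dist_eq_one_iff_adj.mpr hu
      omega
    have hsum : (P.takeUntil i hiP).length + (P.dropUntil i hiP).length = P.length := by
      have := P.take_spec hiP
      have h2 := congrArg SimpleGraph.Walk.length this
      rwa [SimpleGraph.Walk.length_append] at h2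
    have hge : k + 1 ≤ T.dist o u := by omega
    have hle : T.dist o u ≤ k + 1 := by
      have h1 := hT.isConnected.dist_triangle (u := o) (v := i) (w := u)
      have h2 : T.dist i u = 1 := SimpleGraph.dist_eq_one_iff_adj.mpr hu
      omega
    omega
  · -- contradiction: u would be the parent
    exfalso
    have hc : (P.concat hu.symm).IsPath := by
      rw [← SimpleGraph.Walk.isPath_reverse_iff, SimpleGraph.Walk.reverse_concat]
      rw [SimpleGraph.Walk.cons_isPath_iff]
      refine ⟨(P.isPath_reverse_iff).mpr hP, ?_⟩
      rw [SimpleGraph.Walk.support_reverse]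
      simpa using hiP
    have hcq : P.concat hu.symm = q := huniq _ _ hc hq
    have h1 : q.reverse.getVert 1 = p := by
      rw [hcons, SimpleGraph.Walk.getVert_cons_succ, SimpleGraph.Walk.getVert_zero]
    have h2 : q.reverse.getVert 1 = u := by
      rw [← hcq, SimpleGraph.Walk.reverse_concat, SimpleGraph.Walk.getVert_cons_succ,
        SimpleGraph.Walk.getVert_zero]
    exact hup (h2 ▸ h1)


lemma extMatrix_mulVec {V : Type} [Fintype V] [DecidableEq V] (d : ℕ) (G : SimpleGraph V)
    (g : V → ℕ) (Δ z : ℂ) (x : V → ℂ) (i : V) :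
    (extMatrix d G g Δ z).mulVec x i =
      (∑ j, (if G.Adj i j then ((Real.sqrt ((d : ℝ) - 1) : ℂ))⁻¹ else 0) * x j)
        - z * x i - (((d : ℂ) - (g i : ℂ) - (deg G i : ℂ)) / ((d : ℂ) - 1)) * Δ * x i := by
  simp only [extMatrix, Matrix.sub_mulVec, Matrix.smul_mulVec, Matrix.one_mulVec,
    Matrix.mulVec_diagonal, Pi.sub_apply, Pi.smul_apply, smul_eq_mul]
  simp [Matrix.mulVec, dotProduct, normAdj]

lemma ext_det_isUnit {V : Type} [Fintype V] [DecidableEq V] (d : ℕ) (G : SimpleGraph V)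
    (g : V → ℕ) (hg : ∀ v, (deg G v : ℝ) + (g v : ℝ) ≤ (d : ℝ)) (hd : 2 ≤ d)
    (Δ z : ℂ) (hΔ : 0 ≤ Δ.im) (hz : 0 < z.im) :
    IsUnit (extMatrix d G g Δ z).det := by
  rw [isUnit_iff_ne_zero]
  intro hdet
  obtain ⟨x, hx0, hx⟩ := Matrix.exists_mulVec_eq_zero_iff.mpr hdet
  set s : ℝ := Real.sqrt ((d : ℝ) - 1) with hs
  set r : V → ℝ := fun v => ((d : ℝ) - (g v : ℝ) - (deg G v : ℝ)) / ((d : ℝ) - 1) with hr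
  have hrc : ∀ v, ((d : ℂ) - (g v : ℂ) - (deg G v : ℂ)) / ((d : ℂ) - 1) = ((r v : ℝ) : ℂ) := by
    intro v; rw [hr]; push_cast; ring
  have hrnn : ∀ v, 0 ≤ r v := by
    intro v
    apply div_nonneg
    · have := hg v; linarith
    · have : (2 : ℝ) ≤ (d : ℝ) := by exact_mod_cast hd
      linarith
  set A : ℂ := ∑ i, ∑ j, (if G.Adj i j then ((s : ℝ) : ℂ)⁻¹ else 0) *
      ((starRingEnd ℂ) (x i) * x j) with hA
  set B : ℝ := ∑ i, Complex.normSq (x i) with hB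
  set C : ℝ := ∑ i, r i * Complex.normSq (x i) with hC
  have hS : A - z * (B : ℂ) - Δ * (C : ℂ) = 0 := by
    have h0 : ∑ i, (starRingEnd ℂ) (x i) * ((extMatrix d G g Δ z).mulVec x i) = 0 := by
      rw [hx]; simp
    calc A - z * (B : ℂ) - Δ * (C : ℂ)
        = ∑ i, (starRingEnd ℂ) (x i) * ((extMatrix d G g Δ z).mulVec x i) := by
          simp only [extMatrix_mulVec, hrc]
          rw [hA, hB, hC]
          push_cast
          rw [Finset.mul_sum, Finset.mul_sum, ← Finset.sum_sub_distrib,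
            ← Finset.sum_sub_distrib]
          apply Finset.sum_congr rfl
          intro i _
          rw [Complex.normSq_eq_conj_mul_self, mul_sub, mul_sub, Finset.mul_sum]
          congr 1
          · congr 1
            · exact Finset.sum_congr rfl fun j _ => by ring
            · ring
          · ring
      _ = 0 := h0
  have hAc : (starRingEnd ℂ) A = A := by
    conv_lhs => rw [hA]
    rw [map_sum]
    simp only [map_sum, map_mul, map_inv₀, Complex.conj_ofReal, Complex.conj_conj,
      apply_ite (starRingEnd ℂ), map_zero]
    rw [Finset.sum_comm, hA]
    apply Finset.sum_congr rfl
    intro a _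
    apply Finset.sum_congr rfl
    intro b _
    rw [G.adj_comm]
    ring
  have hAim : A.im = 0 := Complex.conj_eq_iff_im.mp hAc
  have him := congrArg Complex.im hS
  simp only [Complex.sub_im, Complex.mul_im, Complex.ofReal_im, Complex.ofReal_re,
    Complex.zero_im, mul_zero, add_zero, hAim] at him
  have hBpos : 0 < B := by
    obtain ⟨i, hi⟩ := Function.ne_iff.mp hx0
    have h1 : 0 < Complex.normSq (x i) := Complex.normSq_pos.mpr hi
    exact Finset.sum_pos' (fun j _ => Complex.normSq_nonneg _) ⟨i, Finset.mem_univ i, h1⟩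
  have hCnn : 0 ≤ C := Finset.sum_nonneg fun i _ => mul_nonneg (hrnn i) (Complex.normSq_nonneg _)
  have h1 := mul_pos hz hBpos
  have h2 := mul_nonneg hΔ hCnn
  linarith


lemma deg_eq_card {V : Type} [Fintype V] (G : SimpleGraph V) (v : V) :
    deg G v = (Finset.univ.filter (fun u => G.Adj v u)).card := by
  rw [deg, Nat.card_eq_fintype_card, Fintype.card_subtype]

lemma green_row {V : Type} [Fintype V] [DecidableEq V] (d : ℕ) (hd : 3 ≤ d)
    (T : SimpleGraph V) (o : V) (hT : T.IsTree) (hdeg : ∀ v, deg T v ≤ d)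
    (hroot : deg T o ≤ d - 1) (z : ℂ) (hz : 0 < z.im) (i : V) :
    extGreen d T (fun v => if v = o then 1 else 0) (mSC z) z o i =
      mSC z * (-(mSC z) / (Real.sqrt ((d : ℝ) - 1) : ℂ)) ^ T.dist o i := by
  obtain ⟨hm, hmim⟩ := mSC_eq z hz
  set m : ℂ := mSC z with hmdef
  set s : ℂ := ((Real.sqrt ((d : ℝ) - 1) : ℝ) : ℂ) with hsdef
  have hd1R : (2 : ℝ) ≤ (d : ℝ) - 1 := by
    have : (3 : ℝ) ≤ (d : ℝ) := by exact_mod_cast hd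
    linarith
  have hs2 : s ^ 2 = (d : ℂ) - 1 := by
    rw [hsdef, ← Complex.ofReal_pow, Real.sq_sqrt (by linarith)]
    push_cast; ring
  have hs0 : s ≠ 0 := by
    rw [hsdef, Complex.ofReal_ne_zero]
    exact Real.sqrt_ne_zero'.mpr (by linarith)
  have hd1 : ((d : ℂ) - 1) ≠ 0 := by
    rw [← hs2]; exact pow_ne_zero 2 hs0
  have hsa : s * s⁻¹ = 1 := mul_inv_cancel₀ hs0
  have hdb : ((d : ℂ) - 1) * ((d : ℂ) - 1)⁻¹ = 1 := mul_inv_cancel₀ hd1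
  set g : V → ℕ := fun v => if v = o then 1 else 0 with hgdef
  set M := extMatrix d T g m z with hM
  set v : V → ℂ := fun j => m * (-m / s) ^ T.dist o j with hv
  -- Step 1: M.mulVec v = e_o
  have hMv : M.mulVec v = Pi.single o 1 := by
    funext i
    rw [hM, extMatrix_mulVec]
    by_cases hio : i = o
    · subst hio
      have hdist1 : ∀ j, T.Adj i j → T.dist i j = 1 := fun j h =>
        SimpleGraph.dist_eq_one_iff_adj.mpr h
      have hsum : (∑ j, (if T.Adj i j then ((Real.sqrt ((d : ℝ) - 1) : ℂ))⁻¹ else 0) * v j)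
          = ((deg T i : ℕ) : ℂ) * (s⁻¹ * (m * (-m / s))) := by
        rw [deg_eq_card]
        rw [show (∑ j, (if T.Adj i j then ((Real.sqrt ((d : ℝ) - 1) : ℂ))⁻¹ else 0) * v j)
            = ∑ j, (if T.Adj i j then s⁻¹ * (m * (-m / s)) else 0) from
          Finset.sum_congr rfl fun j _ => by
            by_cases h : T.Adj i j
            · simp only [h, if_true, hv, hdist1 j h, pow_one, hsdef]
            · simp [h]]
        rw [Finset.sum_ite, Finset.sum_const, Finset.sum_const_zero, add_zero, nsmul_eq_mul]
      rw [hsum]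
      have hgi : ((g i : ℕ) : ℂ) = 1 := by simp [hgdef]
      have hvi : v i = m := by simp [hv, SimpleGraph.dist_self]
      rw [hgi, hvi, Pi.single_eq_same]
      -- algebra: D/s² * m * (-m) - z m - ((d-1-D)/(d-1)) m² = 1
      have hD : ((deg T i : ℕ) : ℂ) = ((deg T i : ℕ) : ℂ) := rfl
      linear_combination (-1 : ℂ) * hm +
        ((deg T i : ℂ) * m ^ 2 * s⁻¹ ^ 2 * ((d : ℂ) - 1)⁻¹) * hs2 -
        ((deg T i : ℂ) * m ^ 2 * ((d : ℂ) - 1)⁻¹ * (1 + s * s⁻¹)) * hsa -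
        (m ^ 2 * (1 - (deg T i : ℂ) * s⁻¹ ^ 2)) * hdb
    · obtain ⟨p, hadj, hdp, hothers⟩ := tree_parent hT o i hio
      obtain ⟨k', hk'⟩ : ∃ k', T.dist o i = k' + 1 := ⟨T.dist o p, hdp.symm⟩
      have hdpp : T.dist o p = k' := by omega
      set F := Finset.univ.filter (fun u => T.Adj i u) with hF
      have hpF : p ∈ F := by simp [hF, hadj]
      have hsum : (∑ j, (if T.Adj i j then ((Real.sqrt ((d : ℝ) - 1) : ℂ))⁻¹ else 0) * v j)
          = s⁻¹ * (m * (-m / s) ^ k') +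
            (((deg T i : ℕ) : ℂ) - 1) * (s⁻¹ * (m * (-m / s) ^ (k' + 2))) := by
        rw [show (∑ j, (if T.Adj i j then ((Real.sqrt ((d : ℝ) - 1) : ℂ))⁻¹ else 0) * v j)
            = ∑ j ∈ F, s⁻¹ * v j from ?_]
        · rw [← Finset.sum_erase_add F _ hpF]
          have h1 : ∀ j ∈ F.erase p, s⁻¹ * v j = s⁻¹ * (m * (-m / s) ^ (k' + 2)) := by
            intro j hj
            rw [Finset.mem_erase] at hj
            obtain ⟨hjp, hjF⟩ := hj
            rw [hF, Finset.mem_filter] at hjF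
            have := hothers j hjF.2 hjp
            rw [hv]
            simp only []
            rw [this, hk']
          rw [Finset.sum_congr rfl h1, Finset.sum_const, nsmul_eq_mul,
            Finset.card_erase_of_mem hpF]
          have hcard : 1 ≤ F.card := Finset.card_pos.mpr ⟨p, hpF⟩
          have hcast : ((F.card - 1 : ℕ) : ℂ) = ((F.card : ℕ) : ℂ) - 1 := by
            push_cast [Nat.cast_sub hcard]; ring
          rw [hcast, ← deg_eq_card]
          have hvp : v p = m * (-m / s) ^ k' := by rw [hv]; simp only []; rw [hdpp]
          rw [hvp]
          ring
        · rw [show (∑ j, (if T.Adj i j then ((Real.sqrt ((d : ℝ) - 1) : ℂ))⁻¹ else 0) * v j)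
              = ∑ j, (if T.Adj i j then s⁻¹ * v j else 0) from
            Finset.sum_congr rfl fun j _ => by
              by_cases h : T.Adj i j
              · simp [h, hsdef]
              · simp [h]]
          rw [Finset.sum_ite, Finset.sum_const_zero, add_zero]
      rw [hsum]
      have hgi : ((g i : ℕ) : ℂ) = 0 := by simp [hgdef, hio]
      have hvi : v i = m * (-m / s) ^ (k' + 1) := by rw [hv]; simp only []; rw [hk']
      rw [hgi, hvi, Pi.single_eq_of_ne (Ne.symm fun h => hio h.symm)]
      linear_combination ((-m / s) ^ k' * (s⁻¹ * m)) * hm -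
        ((-m / s) ^ k' * ((deg T i : ℂ) - 1) * m ^ 3 * s⁻¹ ^ 3 * ((d : ℂ) - 1)⁻¹) * hs2 +
        ((-m / s) ^ k' * ((deg T i : ℂ) - 1) * m ^ 3 * s⁻¹ * ((d : ℂ) - 1)⁻¹ * (1 + s * s⁻¹)) * hsa +
        ((-m / s) ^ k' * (m ^ 3 * s⁻¹ * (1 - ((deg T i : ℂ) - 1) * s⁻¹ ^ 2))) * hdb
  -- Step 2: invertibility
  have hgbound : ∀ w, (deg T w : ℝ) + ((g w : ℕ) : ℝ) ≤ (d : ℝ) := by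
    intro w
    by_cases hw : w = o
    · rw [hw]
      have h1 : deg T o + 1 ≤ d := by omega
      simp only [hgdef, if_pos rfl]
      exact_mod_cast h1
    · simp only [hgdef, if_neg hw, Nat.cast_zero, add_zero]
      exact_mod_cast hdeg w
  have hdet := ext_det_isUnit d T g hgbound (by omega) m z (le_of_lt hmim) hz
  have hinv : M⁻¹ * M = 1 := Matrix.nonsing_inv_mul _ hdet
  -- Step 3: conclude
  have hvM : v = M⁻¹.mulVec (Pi.single o 1) := by
    rw [← hMv, Matrix.mulVec_mulVec, hinv, Matrix.one_mulVec]
  have hsym : Matrix.transpose M = M := by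
    ext a b
    by_cases hab : a = b
    · subst hab; rfl
    · simp only [Matrix.transpose_apply, hM, extMatrix, Matrix.sub_apply, Matrix.smul_apply,
        Matrix.one_apply, Matrix.diagonal_apply, normAdj, Matrix.of_apply, smul_eq_mul]
      rw [T.adj_comm]
      simp [hab, Ne.symm hab]
  have htrans : Matrix.transpose (M⁻¹) = M⁻¹ := by
    rw [Matrix.transpose_nonsing_inv, hsym]
  have hoi : M⁻¹ o i = M⁻¹ i o := by
    conv_lhs => rw [← htrans]
    rw [Matrix.transpose_apply]
  have hfin : M⁻¹ i o = v i := by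
    simp [hvM, Matrix.mulVec_single]
  show M⁻¹ o i = m * (-m / s) ^ T.dist o i
  rw [hoi, hfin]


/-- Green's function of the extension of a rooted finite tree (deficit `1`
at the root) with weight `m_sc(z)`: the explicit formula
`G_{oi} = m_sc(z) (-m_sc(z)/√(d-1))^{dist(o,i)}`; in particular `Y_k(m_sc(z),z) = m_sc(z)`. -/
theorem statement11 (d : ℕ) (hd : 3 ≤ d) {V : Type} [Fintype V] [DecidableEq V]
    (T : SimpleGraph V) (o : V) (hT : T.IsTree) (hdeg : ∀ v, deg T v ≤ d)
    (hroot : deg T o ≤ d - 1) (z : ℂ) (hz : 0 < z.im) :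
    (∀ i : V,
        extGreen d T (fun v => if v = o then 1 else 0) (mSC z) z o i =
          mSC z * (-(mSC z) / (Real.sqrt ((d : ℝ) - 1) : ℂ)) ^ T.dist o i) ∧
      ∀ k : ℕ, 1 ≤ k →
        ∀ (W : Type) [Fintype W] [DecidableEq W] (T' : SimpleGraph W) (o' : W),
          IsTruncAry d k T' o' →
            extGreen d T' (fun v => if v = o' then 1 else 0) (mSC z) z o' o' = mSC z := by
  constructor
  · exact green_row d hd T o hT hdeg hroot z hz
  · intro k hk W _ _ T' o' hTA
    obtain ⟨htree, hdist, hdego, hdegint⟩ := hTA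
    have hdeg' : ∀ v, deg T' v ≤ d := by
      intro v
      by_cases hvo : v = o'
      · subst hvo; omega
      · rcases lt_or_eq_of_le (hdist v) with hlt | heq
        · rw [hdegint v hvo hlt]
        · obtain ⟨p, hadj, hdp, hothers⟩ := tree_parent htree o' v hvo
          have hsub : (Finset.univ.filter (fun u => T'.Adj v u)) ⊆ {p} := by
            intro u hu
            rw [Finset.mem_filter] at hu
            rw [Finset.mem_singleton]
            by_contra hne
            have h1 := hothers u hu.2 hne
            have h2 := hdist u
            omega
          have hle : deg T' v ≤ 1 := by
            rw [deg_eq_card]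
            calc _ ≤ ({p} : Finset W).card := Finset.card_le_card hsub
              _ = 1 := Finset.card_singleton p
          omega
    have hroot' : deg T' o' ≤ d - 1 := le_of_eq hdego
    have hfin := green_row d hd T' o' htree hdeg' hroot' z hz o'
    rw [SimpleGraph.dist_self, pow_zero, mul_one] at hfin
    exact hfin


end Paper
end
end

section
/- Under the setup in the context, assume that the ball B = B_R(o,𝒢) has excess at most ω, and let 𝒜 be the annulus obtained from B by deleting the vertices of 𝕋, equipped with the deficit function g(v) = deg_B(v) − deg_𝒜(v). Then every connected component K of 𝒜 satisfies Σ_{v ∈ K} g(v) ≥ 1 and Σ_{v ∈ K} g(v) + excess(K) ≤ ω + 1. -/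
open scoped Classical

noncomputable section

namespace Paper

section Aux18

set_option linter.unusedSectionVars false

variable {V : Type} [Fintype V] [DecidableEq V]

/-- A canonical finset underlying a set, avoiding `Fintype` instance mismatches. -/
def fset {V : Type} [Fintype V] (s : Set V) : Finset V :=
  @Finset.filter _ (fun v => v ∈ s) (fun _ => Classical.propDecidable _) Finset.univ

@[simp] lemma mem_fset {s : Set V} {v : V} : v ∈ fset s ↔ v ∈ s := by
  simp [fset]

lemma coe_fset (s : Set V) : (fset s : Set V) = s := by
  ext v; simp

lemma fset_eq_toFinset (s : Set V) [Fintype s] : fset s = s.toFinset := by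
  ext v; simp

lemma card_fset (s : Set V) : (fset s).card = Nat.card s := by
  rw [Nat.card_coe_set_eq, Set.ncard_eq_toFinset_card', ← fset_eq_toFinset]

lemma reach_induce_of_walk (G : SimpleGraph V) (s : Set V) :
    ∀ {a b : V} (w : G.Walk a b), (∀ c ∈ w.support, c ∈ s) →
      ∀ (ha : a ∈ s) (hb : b ∈ s), (G.induce s).Reachable ⟨a, ha⟩ ⟨b, hb⟩ := by
  intro a b w
  induction w with
  | nil => intro _ ha hb; rfl
  | @cons a c b h p ih =>
    intro hs ha hb
    have hc : c ∈ s := hs c (by simp)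
    refine SimpleGraph.Reachable.trans ?_ (ih (fun x hx => hs x (by simp [hx])) hc hb)
    exact SimpleGraph.Adj.reachable (by simpa using h)

lemma walk_of_reach_induce (G : SimpleGraph V) (s : Set V) {a b : V} {ha : a ∈ s} {hb : b ∈ s}
    (h : (G.induce s).Reachable ⟨a, ha⟩ ⟨b, hb⟩) :
    ∃ w : G.Walk a b, ∀ c ∈ w.support, c ∈ s := by
  obtain ⟨w⟩ := h
  refine ⟨w.map (SimpleGraph.Embedding.induce s).toHom, ?_⟩
  change ∀ c ∈ (w.map (SimpleGraph.Embedding.induce s).toHom).support, c ∈ s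
  intro c hc
  rw [SimpleGraph.Walk.support_map] at hc
  obtain ⟨x, _, rfl⟩ := List.mem_map.mp hc
  exact x.2

lemma reachable_of_adj_reachable {G G' : SimpleGraph V}
    (h : ∀ x y, G.Adj x y → G'.Reachable x y) {a b : V} (hr : G.Reachable a b) :
    G'.Reachable a b := by
  obtain ⟨w⟩ := hr
  induction w with
  | nil => rfl
  | cons hadj p ih => exact (h _ _ hadj).trans ih

lemma nat_card_edgeSet' {W : Type} [Fintype W] (G : SimpleGraph W) :
    Nat.card G.edgeSet = G.edgeFinset.card := by
  rw [Nat.card_eq_fintype_card, SimpleGraph.edgeFinset, Set.toFinset_card]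

/-- A finite connected graph has at least `card V - 1` edges. -/
lemma connected_card_le {W : Type} [Fintype W] [DecidableEq W] (G : SimpleGraph W)
    (hc : G.Connected) : Fintype.card W ≤ Nat.card G.edgeSet + 1 := by
  generalize hn : Nat.card G.edgeSet = n
  induction n using Nat.strong_induction_on generalizing G with
  | _ n ih =>
  by_cases hac : G.IsAcyclic
  · have ht : G.IsTree := ⟨hc, hac⟩
    have h2 := ht.card_edgeFinset
    have h3 := nat_card_edgeSet' G
    omega
  · rw [SimpleGraph.isAcyclic_iff_forall_adj_isBridge] at hac
    push_neg at hac
    obtain ⟨v, w, hvw, hbr⟩ := hac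
    set G' := G \ SimpleGraph.fromEdgeSet {s(v, w)} with hG'
    have hreach : G'.Reachable v w := by
      by_contra hr
      exact hbr hr
    have hadjreach : ∀ x y, G.Adj x y → G'.Reachable x y := by
      intro x y hxy
      by_cases he : s(x, y) = s(v, w)
      · rcases Sym2.eq_iff.mp he with ⟨rfl, rfl⟩ | ⟨rfl, rfl⟩
        · exact hreach
        · exact hreach.symm
      · exact SimpleGraph.Adj.reachable (by
          simp only [hG', SimpleGraph.sdiff_adj, SimpleGraph.fromEdgeSet_adj]
          exact ⟨hxy, fun h => he h.1⟩)
    have hc' : G'.Connected := by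
      haveI := hc.nonempty
      exact ⟨fun a b => reachable_of_adj_reachable hadjreach (hc.preconnected a b)⟩
    have hES : G'.edgeSet = G.edgeSet \ {s(v, w)} := by
      simp [hG', SimpleGraph.edgeSet_sdiff, SimpleGraph.edgeSet_fromEdgeSet,
        SimpleGraph.edgeSet_sdiff_sdiff_isDiag]
    have hss : G'.edgeSet ⊂ G.edgeSet := by
      rw [hES]
      exact Set.sdiff_singleton_ssubset.mpr ((SimpleGraph.mem_edgeSet G).mpr hvw)
    have hlt : Nat.card G'.edgeSet < n := by
      rw [← hn, Nat.card_coe_set_eq, Nat.card_coe_set_eq]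
      exact Set.ncard_lt_ncard hss (Set.toFinite _)
    have := ih _ hlt G' hc' rfl
    omega

lemma card_connectedComponent_eq_one {W : Type} (H : SimpleGraph W) (hc : H.Connected) :
    Nat.card H.ConnectedComponent = 1 := by
  haveI : Nonempty H.ConnectedComponent := ⟨H.connectedComponentMk hc.nonempty.some⟩
  haveI : Subsingleton H.ConnectedComponent := by
    constructor
    intro a b
    induction a using SimpleGraph.ConnectedComponent.ind with
    | _ x =>
    induction b using SimpleGraph.ConnectedComponent.ind with
    | _ y =>
    exact SimpleGraph.ConnectedComponent.sound (hc.preconnected x y)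
  exact Nat.card_eq_one_iff_unique.mpr ⟨inferInstance, inferInstance⟩

lemma excess_of_connected {W : Type} [Fintype W] (H : SimpleGraph W) (hc : H.Connected) :
    excess H = (Nat.card H.edgeSet : ℤ) - (Fintype.card W : ℤ) + 1 := by
  rw [excess, card_connectedComponent_eq_one H hc]
  rw [show Nat.card W = Fintype.card W from Nat.card_eq_fintype_card]
  norm_num

lemma degIn_eq_sum (G : SimpleGraph V) (s : Set V) (v : V) :
    degIn G s v = ∑ w : V, if w ∈ s ∧ G.Adj v w then 1 else 0 := by
  rw [degIn, Nat.card_eq_fintype_card, Fintype.card_subtype, Finset.card_filter]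

lemma degIn_split (G : SimpleGraph V) {s t : Set V} (h : s ⊆ t) (v : V) :
    degIn G t v = degIn G s v + degIn G (t \ s) v := by
  simp_rw [degIn_eq_sum, ← Finset.sum_add_distrib]
  apply Finset.sum_congr rfl
  intro w _
  by_cases hws : w ∈ s
  · simp [hws, h hws, Set.mem_diff]
  · simp [hws, Set.mem_diff]

lemma degIn_zero (G : SimpleGraph V) {s : Set V} {v : V}
    (h : ∀ w ∈ s, ¬ G.Adj v w) : degIn G s v = 0 := by
  rw [degIn_eq_sum]
  apply Finset.sum_eq_zero
  intro w _
  simp only [ite_eq_right_iff]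
  rintro ⟨hw, hadj⟩
  exact absurd hadj (h w hw)

lemma degree_induce (G : SimpleGraph V) (s : Set V) (x : s) :
    (G.induce s).degree x = degIn G s x.val := by
  rw [← SimpleGraph.card_neighborSet_eq_degree, degIn]
  rw [Nat.card_eq_fintype_card]
  apply Fintype.card_congr
  exact {
    toFun := fun w => ⟨w.1.1, w.1.2, w.2⟩
    invFun := fun w => ⟨⟨w.1, w.2.1⟩, w.2.2⟩
    left_inv := fun w => rfl
    right_inv := fun w => rfl }

lemma sum_degIn (G : SimpleGraph V) (s : Set V) :
    ∑ v ∈ fset s, degIn G s v = 2 * Nat.card (G.induce s).edgeSet := by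
  rw [fset_eq_toFinset]
  rw [nat_card_edgeSet', ← SimpleGraph.sum_degrees_eq_twice_card_edges]
  rw [← Finset.sum_coe_sort s.toFinset (fun v => degIn G s v)]
  apply Fintype.sum_equiv (Equiv.subtypeEquivRight (fun x => by simp)).symm
  intro x
  convert (degree_induce G s _).symm using 2
  rfl

lemma sum_degIn_pairs (G : SimpleGraph V) (s t : Set V) :
    ∑ v ∈ fset s, degIn G t v =
      ∑ v : V, ∑ w : V, if v ∈ s ∧ w ∈ t ∧ G.Adj v w then 1 else 0 := by
  have hs : fset s = Finset.univ.filter (fun v => v ∈ s) := by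
    ext v; simp
  rw [hs, Finset.sum_filter]
  apply Finset.sum_congr rfl
  intro v _
  by_cases hv : v ∈ s
  · simp only [hv, if_true, degIn_eq_sum]
    apply Finset.sum_congr rfl
    intro w _
    simp [hv]
  · simp [hv]

lemma cross_symm (G : SimpleGraph V) (s t : Set V) :
    ∑ v ∈ fset s, degIn G t v = ∑ v ∈ fset t, degIn G s v := by
  rw [sum_degIn_pairs, sum_degIn_pairs, Finset.sum_comm]
  apply Finset.sum_congr rfl; intro v _
  apply Finset.sum_congr rfl; intro w _
  congr 1
  simp only [eq_iff_iff]
  constructor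
  · rintro ⟨h1, h2, h3⟩; exact ⟨h2, h1, h3.symm⟩
  · rintro ⟨h1, h2, h3⟩; exact ⟨h2, h1, h3.symm⟩

lemma mem_ball_of_walk {G : SimpleGraph V} {o v : V} {r : ℝ} (w : G.Walk o v)
    (h : (w.length : ℝ) ≤ r) : v ∈ ball G {o} r :=
  ⟨o, rfl, w, h⟩

lemma ball_mono {G : SimpleGraph V} {o : V} {r r' : ℝ} (h : r ≤ r') :
    ball G {o} r ⊆ ball G {o} r' := by
  rintro v ⟨u, hu, w, hw⟩
  exact ⟨u, hu, w, hw.trans h⟩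

lemma exists_walk_support_ball {G : SimpleGraph V} {o v : V} {r : ℝ}
    (h : v ∈ ball G {o} r) :
    ∃ w : G.Walk o v, (w.length : ℝ) ≤ r ∧ ∀ c ∈ w.support, c ∈ ball G {o} r := by
  obtain ⟨u, hu, w, hw⟩ := h
  rcases hu with rfl
  refine ⟨w, hw, fun c hc => ?_⟩
  refine mem_ball_of_walk (w.takeUntil c hc) ?_
  exact le_trans (by exact_mod_cast w.length_takeUntil_le hc) hw

lemma mem_ball_self' {G : SimpleGraph V} {o : V} {r : ℝ} (h : 0 ≤ r) :
    o ∈ ball G {o} r :=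
  mem_ball_of_walk SimpleGraph.Walk.nil (by simpa using h)

lemma ball_reach {G : SimpleGraph V} {o v : V} {r : ℝ} (h : v ∈ ball G {o} r)
    (ho : o ∈ ball G {o} r) :
    (G.induce (ball G {o} r)).Reachable ⟨o, ho⟩ ⟨v, h⟩ := by
  obtain ⟨w, _, hsup⟩ := exists_walk_support_ball h
  exact reach_induce_of_walk G _ w hsup _ _

lemma comp_subset {G : SimpleGraph V} {s : Set V} {u : V} : comp G s u ⊆ s := by
  rintro w ⟨hu, hw, _⟩; exact hw

lemma mem_comp_self {G : SimpleGraph V} {s : Set V} {u : V} (hu : u ∈ s) : u ∈ comp G s u :=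
  ⟨hu, hu, .refl _⟩

lemma mem_comp_of_reach {G : SimpleGraph V} {s : Set V} {u v w : V}
    (hv : v ∈ comp G s u) (hw : w ∈ s)
    (h : (G.induce s).Reachable ⟨v, comp_subset hv⟩ ⟨w, hw⟩) : w ∈ comp G s u := by
  obtain ⟨hu, hv', hr⟩ := hv
  exact ⟨hu, hw, hr.trans h⟩

lemma comp_adj_closure {G : SimpleGraph V} {s : Set V} {u v w : V}
    (hv : v ∈ comp G s u) (hw : w ∈ s) (hadj : G.Adj v w) : w ∈ comp G s u :=
  mem_comp_of_reach hv hw (SimpleGraph.Adj.reachable (by simpa using hadj))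

lemma comp_symm_mem {G : SimpleGraph V} {s : Set V} {u v : V} (hv : v ∈ comp G s u) :
    u ∈ comp G s v := by
  obtain ⟨hu, hv', hr⟩ := hv
  exact ⟨hv', hu, hr.symm⟩

lemma comp_trans {G : SimpleGraph V} {s : Set V} {u v w : V} (hv : v ∈ comp G s u)
    (hw : w ∈ comp G s v) : w ∈ comp G s u := by
  obtain ⟨hv', hw', hr⟩ := hw
  exact mem_comp_of_reach hv hw' hr

lemma comp_walk {G : SimpleGraph V} {s : Set V} {u w : V} (hw : w ∈ comp G s u) :
    ∃ p : G.Walk u w, ∀ c ∈ p.support, c ∈ comp G s u := by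
  obtain ⟨hu, hw', hr⟩ := hw
  obtain ⟨p, hp⟩ := walk_of_reach_induce G s hr
  refine ⟨p, fun c hc => ?_⟩
  have hcs : c ∈ s := hp c hc
  have : (G.induce s).Reachable ⟨u, hu⟩ ⟨c, hcs⟩ := by
    refine reach_induce_of_walk G s (p.takeUntil c hc) ?_ hu hcs
    exact fun x hx => hp x (p.support_takeUntil_subset hc hx)
  exact ⟨hu, hcs, this⟩

lemma comp_connected {G : SimpleGraph V} {s : Set V} {u : V} (hu : u ∈ s) :
    (G.induce (comp G s u)).Connected := by
  haveI : Nonempty (comp G s u) := ⟨⟨u, mem_comp_self hu⟩⟩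
  constructor
  rintro ⟨x, hx⟩ ⟨y, hy⟩
  obtain ⟨px, hpx⟩ := comp_walk hx
  obtain ⟨py, hpy⟩ := comp_walk hy
  exact (reach_induce_of_walk G _ px hpx (mem_comp_self hu) hx).symm.trans
    (reach_induce_of_walk G _ py hpy (mem_comp_self hu) hy)

lemma last_exit {G : SimpleGraph V} {T B : Set V} :
    ∀ {a b : V} (w : G.Walk a b), (∀ c ∈ w.support, c ∈ B) → b ∈ B \ T →
      (a ∈ T → ∃ t v₁, t ∈ T ∧ v₁ ∈ B \ T ∧ G.Adj t v₁ ∧ v₁ ∈ comp G (B \ T) b) ∧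
      (a ∈ B \ T → a ∈ comp G (B \ T) b ∨
        ∃ t v₁, t ∈ T ∧ v₁ ∈ B \ T ∧ G.Adj t v₁ ∧ v₁ ∈ comp G (B \ T) b) := by
  intro a b w
  induction w with
  | nil =>
    intro _ hb
    refine ⟨fun ha => absurd ha hb.2, fun _ => Or.inl (mem_comp_self hb)⟩
  | @cons a c b h p ih =>
    intro hs hb
    have hcB : c ∈ B := hs c (by simp)
    have IH := ih (fun x hx => hs x (by simp [hx])) hb
    constructor
    · intro haT
      by_cases hcT : c ∈ T
      · exact IH.1 hcT
      · rcases IH.2 ⟨hcB, hcT⟩ with hcomp | goal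
        · exact ⟨a, c, haT, ⟨hcB, hcT⟩, h, hcomp⟩
        · exact goal
    · intro haA
      by_cases hcT : c ∈ T
      · exact Or.inr (IH.1 hcT)
      · rcases IH.2 ⟨hcB, hcT⟩ with hcomp | goal
        · exact Or.inl (comp_adj_closure hcomp haA h.symm)
        · exact Or.inr goal

end Aux18

/-- every connected component of the annulus `B_R(o) \ 𝕋`, carrying the
deficit function `g(v) = deg_B(v) - deg_𝒜(v)`, has total deficit at least `1`, and the
total deficit plus the excess of the component is at most `ω + 1`. -/
theorem statement18 (d : ℕ) (hd : 3 ≤ d) (N : ℕ) (G : SimpleGraph (Fin N))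
    (hreg : IsRegular d G) (o : Fin N) (ℓ : ℕ) (hl : 1 ≤ ℓ) (R : ℝ)
    (hR : 2 * (ℓ : ℝ) ≤ R) (ω : ℕ)
    (hex : excess (G.induce (ball G {o} R)) ≤ (ω : ℤ)) :
    ∀ u : Fin N, u ∈ ball G {o} R \ ball G {o} (ℓ : ℝ) →
      (1 ≤ ∑ᶠ v ∈ comp G (ball G {o} R \ ball G {o} (ℓ : ℝ)) u,
            ((degIn G (ball G {o} R) v : ℤ) -
              (degIn G (ball G {o} R \ ball G {o} (ℓ : ℝ)) v : ℤ))) ∧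
      (∑ᶠ v ∈ comp G (ball G {o} R \ ball G {o} (ℓ : ℝ)) u,
            ((degIn G (ball G {o} R) v : ℤ) -
              (degIn G (ball G {o} R \ ball G {o} (ℓ : ℝ)) v : ℤ))) +
          excess (G.induce (comp G (ball G {o} R \ ball G {o} (ℓ : ℝ)) u)) ≤ (ω : ℤ) + 1 := by
  intro u hu
  classical
  set B : Set (Fin N) := ball G {o} R with hBdef
  set T : Set (Fin N) := ball G {o} (ℓ : ℝ) with hTdef
  have hl0 : (0 : ℝ) ≤ (ℓ : ℝ) := by positivity
  have hlR : (ℓ : ℝ) ≤ R := by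
    have h1 : (1 : ℝ) ≤ (ℓ : ℝ) := by exact_mod_cast hl
    linarith
  set A : Set (Fin N) := B \ T with hAdef
  set K : Set (Fin N) := comp G A u with hKdef
  set C : Set (Fin N) := B \ K with hCdef
  have huA : u ∈ A := hu
  have huB : u ∈ B := huA.1
  have hTB : T ⊆ B := ball_mono hlR
  have hKA : K ⊆ A := comp_subset
  have hKB : K ⊆ B := fun v hv => (hKA hv).1
  have huK : u ∈ K := mem_comp_self huA
  have hoT : o ∈ T := mem_ball_self' hl0
  have hoB : o ∈ B := hTB hoT
  have hTK : ∀ t ∈ T, t ∉ K := fun t ht htK => (hKA htK).2 ht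
  have hoC : o ∈ C := ⟨hoB, hTK o hoT⟩
  have hTC : T ⊆ C := fun t ht => ⟨hTB ht, hTK t ht⟩
  -- last exit for u
  obtain ⟨wu, hwulen, hwusup⟩ := exists_walk_support_ball huB
  obtain ⟨t0, v1, ht0T, hv1A, hadj01, hv1K⟩ :=
    (last_exit (T := T) (B := B) wu hwusup huA).1 hoT
  have hv1K' : v1 ∈ K := hv1K
  -- the deficit of a component vertex equals its degree into C
  have hdegA : ∀ v ∈ K, degIn G A v = degIn G K v := by
    intro v hv
    have hz : degIn G (A \ K) v = 0 := by
      apply degIn_zero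
      rintro w ⟨hwA, hwK⟩ hadj
      exact hwK (comp_adj_closure hv hwA hadj)
    have := degIn_split G hKA v
    omega
  have hdegB : ∀ v ∈ K, degIn G B v = degIn G K v + degIn G C v := fun v hv =>
    degIn_split G hKB v
  have hterm : ∀ v ∈ fset K,
      ((degIn G B v : ℤ) - (degIn G A v : ℤ)) = ((degIn G C v : ℤ)) := by
    intro v hv
    have hvK : v ∈ K := mem_fset.mp hv
    rw [hdegA v hvK, hdegB v hvK]
    push_cast
    ring
  have hsum : (∑ᶠ v ∈ K, ((degIn G B v : ℤ) - (degIn G A v : ℤ)))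
      = ∑ v ∈ fset K, (degIn G C v : ℤ) := by
    have h1 := finsum_mem_coe_finset (s := fset K)
      (f := fun v => ((degIn G B v : ℤ) - (degIn G A v : ℤ)))
    rw [coe_fset] at h1
    rw [h1]
    exact Finset.sum_congr rfl hterm
  -- part 1
  have hS1 : 1 ≤ ∑ v ∈ fset K, degIn G C v := by
    have hv1 : v1 ∈ fset K := mem_fset.mpr hv1K'
    have hpos : 1 ≤ degIn G C v1 := by
      haveI : Nonempty {w : Fin N // w ∈ C ∧ G.Adj v1 w} :=
        ⟨⟨t0, hTC ht0T, hadj01.symm⟩⟩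
      exact Nat.card_pos
    exact le_trans hpos (Finset.single_le_sum (fun i _ => Nat.zero_le _) hv1)
  -- counting identity
  have hBsplit : fset B = fset K ∪ fset C := by
    ext v
    simp only [mem_fset, Finset.mem_union, hCdef, Set.mem_diff]
    constructor
    · intro hvB
      by_cases hvK : v ∈ K
      · exact Or.inl hvK
      · exact Or.inr ⟨hvB, hvK⟩
    · rintro (hvK | ⟨hvB, _⟩)
      · exact hKB hvK
      · exact hvB
  have hdisj : Disjoint (fset K) (fset C) := by
    rw [Finset.disjoint_left]
    intro v hvK hvC
    exact (mem_fset.mp hvC).2 (mem_fset.mp hvK)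
  have hBC : B \ C = K := by
    rw [hCdef]
    exact Set.diff_diff_cancel_left hKB
  have hcount : 2 * Nat.card (G.induce B).edgeSet
      = 2 * Nat.card (G.induce K).edgeSet + 2 * Nat.card (G.induce C).edgeSet
        + 2 * ∑ v ∈ fset K, degIn G C v := by
    have e1 : ∑ v ∈ fset B, degIn G B v = 2 * Nat.card (G.induce B).edgeSet :=
      sum_degIn G B
    have e2 : ∑ v ∈ fset K, degIn G K v = 2 * Nat.card (G.induce K).edgeSet :=
      sum_degIn G K
    have e3 : ∑ v ∈ fset C, degIn G C v = 2 * Nat.card (G.induce C).edgeSet :=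
      sum_degIn G C
    have s1 : ∑ v ∈ fset B, degIn G B v
        = ∑ v ∈ fset K, degIn G B v + ∑ v ∈ fset C, degIn G B v := by
      rw [hBsplit, Finset.sum_union hdisj]
    have s2 : ∑ v ∈ fset K, degIn G B v
        = ∑ v ∈ fset K, degIn G K v + ∑ v ∈ fset K, degIn G C v := by
      rw [← Finset.sum_add_distrib]
      exact Finset.sum_congr rfl fun v hv => hdegB v (mem_fset.mp hv)
    have s3 : ∑ v ∈ fset C, degIn G B v
        = ∑ v ∈ fset C, degIn G C v + ∑ v ∈ fset K, degIn G C v := by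
      have hCB : C ⊆ B := fun v hv => hv.1
      have h4 : ∀ v ∈ fset C, degIn G B v = degIn G C v + degIn G K v := by
        intro v _
        have h5 := degIn_split G hCB v
        rw [hBC] at h5
        exact h5
      rw [Finset.sum_congr rfl h4, Finset.sum_add_distrib, cross_symm G C K]
    omega
  -- connectivity facts
  have hBconn : (G.induce B).Connected := by
    haveI : Nonempty B := ⟨⟨o, hoB⟩⟩
    exact ⟨fun x y => ((ball_reach x.2 hoB).symm.trans (ball_reach y.2 hoB))⟩
  have hKconn : (G.induce K).Connected := comp_connected huA
  have hTreach : ∀ x (hx : x ∈ T), (G.induce C).Reachable ⟨o, hoC⟩ ⟨x, hTC hx⟩ := by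
    intro x hx
    obtain ⟨wx, _, hsup⟩ := exists_walk_support_ball hx
    exact reach_induce_of_walk G C wx (fun c hc => hTC (hsup c hc)) hoC (hTC hx)
  have hCreach : ∀ x (hx : x ∈ C), (G.induce C).Reachable ⟨x, hx⟩ ⟨o, hoC⟩ := by
    intro x hx
    by_cases hxT : x ∈ T
    · exact (hTreach x hxT).symm
    · have hxA : x ∈ A := ⟨hx.1, hxT⟩
      have hKdisj : ∀ c ∈ comp G A x, c ∉ K := by
        intro c hc hcK
        exact hx.2 (comp_trans hcK (comp_symm_mem hc))
      have hsubC : comp G A x ⊆ C := fun c hc => ⟨(comp_subset hc).1, hKdisj c hc⟩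
      obtain ⟨wx, _, hsupx⟩ := exists_walk_support_ball hx.1
      obtain ⟨t1, w1, ht1T, hw1A, hadj1, hw1comp⟩ :=
        (last_exit (T := T) (B := B) wx hsupx hxA).1 hoT
      obtain ⟨p, hp⟩ := comp_walk hw1comp
      have hw1C : w1 ∈ C := hsubC hw1comp
      have r1 : (G.induce C).Reachable ⟨x, hx⟩ ⟨w1, hw1C⟩ :=
        reach_induce_of_walk G C p (fun c hc => hsubC (hp c hc)) hx hw1C
      have r2 : (G.induce C).Reachable ⟨w1, hw1C⟩ ⟨t1, hTC ht1T⟩ :=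
        SimpleGraph.Adj.reachable (by simpa using hadj1.symm)
      exact (r1.trans r2).trans (hTreach t1 ht1T).symm
  have hCconn : (G.induce C).Connected := by
    haveI : Nonempty C := ⟨⟨o, hoC⟩⟩
    exact ⟨fun x y => (hCreach x.1 x.2).trans (hCreach y.1 y.2).symm⟩
  -- cardinalities
  have hCle : (fset C).card ≤ Nat.card (G.induce C).edgeSet + 1 := by
    have h := connected_card_le (G.induce C) hCconn
    rwa [← Nat.card_eq_fintype_card, ← card_fset] at h
  have hnB : (fset B).card = (fset K).card + (fset C).card := by
    rw [hBsplit, Finset.card_union_of_disjoint hdisj]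
  have hcardB : Nat.card B = (fset B).card := (card_fset B).symm
  have hcardK : Nat.card K = (fset K).card := (card_fset K).symm
  have hexB : excess (G.induce B)
      = (Nat.card (G.induce B).edgeSet : ℤ) - ((fset B).card : ℤ) + 1 := by
    rw [excess_of_connected _ hBconn, ← Nat.card_eq_fintype_card, card_fset]
  have hexK : excess (G.induce K)
      = (Nat.card (G.induce K).edgeSet : ℤ) - ((fset K).card : ℤ) + 1 := by
    rw [excess_of_connected _ hKconn, ← Nat.card_eq_fintype_card, card_fset]
  have hexB' : (Nat.card (G.induce B).edgeSet : ℤ) - ((fset B).card : ℤ) + 1 ≤ (ω : ℤ) := by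
    rw [← hexB]
    exact hex
  have hcastsum : (∑ v ∈ fset K, (degIn G C v : ℤ))
      = ((∑ v ∈ fset K, degIn G C v : ℕ) : ℤ) := by
    push_cast
    rfl
  constructor
  · rw [hsum, hcastsum]
    exact_mod_cast hS1
  · rw [hsum, hcastsum, hexK]
    omega

end Paper
end
end
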